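/- Let D be a domain in ℝⁿ, n ≥ 2, and let f_j : D → ℝⁿ, j = 1, 2, …, be homeomorphisms satisfying the inverse Poletsky inequality with a function Q at a point y₀ ∈ ℝⁿ and converging to a mapping f : D → ℝ̄ⁿ locally uniformly in D with respect to the chordal metric h. Assume that f is not constant in D. Then for any y₀ ∈ ℝⁿ there exist ε₀ = ε₀(y₀) > 0, a point z₀ ∈ D, and ε₂ = ε₂(z₀) > 0 such that f_m(E) ∩ B̄(y₀,ε₀) = ∅ for all m = 1, 2, …, where E := B̄(z₀,ε₂). -/

import Mathlib

open Set MeasureTheory Metric Filter Topology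
open scoped ENNReal NNReal BigOperators

noncomputable section

/-- Euclidean space `ℝⁿ`. -/
abbrev Rn (n : ℕ) := EuclideanSpace ℝ (Fin n)

/-- A (parametrized) path in `ℝⁿ`: a continuous map on a closed interval `[a, b]`. -/
structure Path' (n : ℕ) where
  a : ℝ
  b : ℝ
  hab : a ≤ b
  toFun : ℝ → Rn n
  cont : ContinuousOn toFun (Set.Icc a b)

/-- A path (on a compact interval) is (locally) rectifiable iff it has finite variation. -/
def Path'.Rectifiable {n : ℕ} (γ : Path' n) : Prop :=
  eVariationOn γ.toFun (Set.Icc γ.a γ.b) ≠ ⊤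

/-- The line integral `∫_γ ρ |dx|`, defined as the lower Darboux–Stieltjes integral of
`ρ ∘ γ` against arc length: the supremum over partitions `γ.a = t 0 ≤ ⋯ ≤ t k = γ.b`
of the sums `∑ (inf of ρ∘γ on [tᵢ, tᵢ₊₁]) · dist (γ tᵢ) (γ tᵢ₊₁)`. -/
def pathLIntegral {n : ℕ} (ρ : Rn n → ℝ≥0∞) (γ : Path' n) : ℝ≥0∞ :=
  ⨆ (k : ℕ) (t : Fin (k + 1) → ℝ) (_ : Monotone t) (_ : t 0 = γ.a)
      (_ : t (Fin.last k) = γ.b),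
    ∑ i : Fin k, (⨅ s ∈ Set.Icc (t i.castSucc) (t i.succ), ρ (γ.toFun s)) *
      edist (γ.toFun (t i.castSucc)) (γ.toFun (t i.succ))

/-- A Borel function `ρ : ℝⁿ → [0,∞]` is admissible for a family `Γ` of paths if
`∫_γ ρ |dx| ≥ 1` for every (locally) rectifiable `γ ∈ Γ`. -/
def IsAdmissible {n : ℕ} (ρ : Rn n → ℝ≥0∞) (Γ : Set (Path' n)) : Prop :=
  Measurable ρ ∧ ∀ γ ∈ Γ, γ.Rectifiable → 1 ≤ pathLIntegral ρ γ

/-- The modulus `M(Γ)` of a family of paths in `ℝⁿ`. -/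
def modulus {n : ℕ} (Γ : Set (Path' n)) : ℝ≥0∞ :=
  ⨅ (ρ : Rn n → ℝ≥0∞) (_ : IsAdmissible ρ Γ), ∫⁻ x, ρ x ^ n ∂volume

/-- `Γ(E, F, D)`: the family of paths `γ : [a,b] → ℝⁿ` with `γ a ∈ E`, `γ b ∈ F` and
`γ t ∈ D` for `t ∈ (a, b)`. -/
def pathFamily {n : ℕ} (E F D : Set (Rn n)) : Set (Path' n) :=
  {γ | γ.toFun γ.a ∈ E ∧ γ.toFun γ.b ∈ F ∧ ∀ t ∈ Set.Ioo γ.a γ.b, γ.toFun t ∈ D}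

/-- The spherical annulus `A(y₀, r₁, r₂) = {y : r₁ < |y - y₀| < r₂}`. -/
def annulusA {n : ℕ} (y0 : Rn n) (r1 r2 : ℝ) : Set (Rn n) :=
  {y | r1 < dist y y0 ∧ dist y y0 < r2}

/-- `Γ_f(y₀, r₁, r₂)`: all paths `γ` in `D` such that `f ∘ γ` joins the spheres
`S(y₀, r₁)` and `S(y₀, r₂)` within the annulus `A(y₀, r₁, r₂)`. -/
def gammaF {n : ℕ} (f : Rn n → Rn n) (D : Set (Rn n)) (y0 : Rn n) (r1 r2 : ℝ) :
    Set (Path' n) :=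
  {γ | (∀ t ∈ Set.Icc γ.a γ.b, γ.toFun t ∈ D) ∧
    ((f (γ.toFun γ.a) ∈ Metric.sphere y0 r1 ∧ f (γ.toFun γ.b) ∈ Metric.sphere y0 r2) ∨
      (f (γ.toFun γ.a) ∈ Metric.sphere y0 r2 ∧ f (γ.toFun γ.b) ∈ Metric.sphere y0 r1)) ∧
    ∀ t ∈ Set.Ioo γ.a γ.b, f (γ.toFun t) ∈ annulusA y0 r1 r2}

/-- `f` satisfies the inverse Poletsky inequality at `y₀ ∈ ℝⁿ` with the function `Q`. -/
def InversePoletskyAt {n : ℕ} (f : Rn n → Rn n) (D : Set (Rn n)) (Q : Rn n → ℝ≥0∞)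
    (y0 : Rn n) : Prop :=
  ∀ r1 r2 : ℝ, 0 < r1 → r1 < r2 →
    ∀ η : ℝ → ℝ≥0∞, Measurable η → (1 : ℝ≥0∞) ≤ ∫⁻ r in Set.Ioo r1 r2, η r →
      modulus (gammaF f D y0 r1 r2) ≤
        ∫⁻ y in annulusA y0 r1 r2 ∩ (f '' D), Q y * η (dist y y0) ^ n

/-- The inversion `ψ(y) = y / |y|²` at the origin. -/
def inv0 {n : ℕ} (y : Rn n) : Rn n := (‖y‖ ^ 2)⁻¹ • y

/-- `f` satisfies the inverse Poletsky inequality at every point `y₀ ∈ ℝ̄ⁿ`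
(at `y₀ = ∞` the condition is understood via the inversion `y ↦ y/|y|²`). -/
def InversePoletskyAll {n : ℕ} (f : Rn n → Rn n) (D : Set (Rn n)) (Q : Rn n → ℝ≥0∞) : Prop :=
  (∀ y0 : Rn n, InversePoletskyAt f D Q y0) ∧
    InversePoletskyAt (fun x => inv0 (f x)) D (fun y => Q (inv0 y)) 0

/-- The chordal (spherical) metric on `ℝ̄ⁿ = ℝⁿ ∪ {∞}`. -/
def chordal {n : ℕ} (x y : OnePoint (Rn n)) : ℝ :=
  match x, y with
  | Option.some x, Option.some y =>
      dist x y / (Real.sqrt (1 + ‖x‖ ^ 2) * Real.sqrt (1 + ‖y‖ ^ 2))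
  | Option.some x, Option.none => 1 / Real.sqrt (1 + ‖x‖ ^ 2)
  | Option.none, Option.some y => 1 / Real.sqrt (1 + ‖y‖ ^ 2)
  | Option.none, Option.none => 0

/-- The chordal diameter `h(E)` of a set `E ⊂ ℝ̄ⁿ`. -/
def chordalDiam {n : ℕ} (E : Set (OnePoint (Rn n))) : ℝ :=
  sSup {d | ∃ x ∈ E, ∃ y ∈ E, d = chordal x y}

/-- The chordal diameter of a set `E ⊂ ℝⁿ`. -/
def chordalDiam' {n : ℕ} (E : Set (Rn n)) : ℝ :=
  chordalDiam ((fun x : Rn n => (x : OnePoint (Rn n))) '' E)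

/-- `fm` converges to `f` locally uniformly on `D` with respect to the chordal metric. -/
def ChordalLocUnif {n : ℕ} (fm : ℕ → Rn n → Rn n) (f : Rn n → OnePoint (Rn n))
    (D : Set (Rn n)) : Prop :=
  ∀ x₀ ∈ D, ∀ ε > 0, ∃ δ > 0, ∃ N : ℕ, ∀ m ≥ N, ∀ x ∈ D, dist x x₀ < δ →
    chordal (fm m x : OnePoint (Rn n)) (f x) < ε

/-- `f` is a homeomorphism of `D` into `ℝⁿ`: continuous, injective and open on `D`. -/
def IsHomeoOn {n : ℕ} (f : Rn n → Rn n) (D : Set (Rn n)) : Prop :=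
  ContinuousOn f D ∧ Set.InjOn f D ∧ ∀ U ⊆ D, IsOpen U → IsOpen (f '' U)

/-- `φ` has finite mean oscillation at `x₀` (the limsup as `ε → 0` of the mean of
`|φ - φ̄_ε|` over `B(x₀, ε)` is finite, i.e. it is eventually bounded). -/
def FMOAt {n : ℕ} (φ : Rn n → ℝ) (x0 : Rn n) : Prop :=
  ∃ C : ℝ, ∀ᶠ ε in 𝓝[>] (0 : ℝ),
    (volume (Metric.ball x0 ε)).toReal⁻¹ *
      ∫ x in Metric.ball x0 ε,
        |φ x - (volume (Metric.ball x0 ε)).toReal⁻¹ * ∫ y in Metric.ball x0 ε, φ y| ≤ C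

/-- `ω_{n-1}`, the area of the unit sphere in `ℝⁿ` (as `(n-1)`-Hausdorff measure). -/
def omegaS (n : ℕ) : ℝ≥0∞ := μH[(n : ℝ) - 1] (Metric.sphere (0 : Rn n) 1)

/-- The spherical mean `q_{y₀}(r)` of `Q` over the sphere `S(y₀, r)`. -/
def sphMean {n : ℕ} (Q : Rn n → ℝ≥0∞) (y0 : Rn n) (r : ℝ) : ℝ≥0∞ :=
  (omegaS n * ENNReal.ofReal (r ^ (n - 1)))⁻¹ *
    ∫⁻ y in Metric.sphere y0 r, Q y ∂(μH[(n : ℝ) - 1])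

/-- The control hypothesis of the main lemmas at a point `y₀ ∈ ℝⁿ`: there are `ε₀ > 0`
and a Lebesgue measurable `ψ : (0,ε₀) → [0,∞]` such that
`I(ε,ε₀) := ∫_ε^{ε₀} ψ(t) dt < ∞` for all `ε ∈ (0,ε₀)`, `I(ε,ε₀) → ∞` as `ε → 0`, and
`∫_{A(y₀,ε,ε₀)} Q(y)·ψⁿ(|y-y₀|) dm(y) = α(ε,ε₀)·Iⁿ(ε,ε₀)` for some `α(ε,ε₀) > 0`
with `α(ε,ε₀) → 0` as `ε → 0`. -/
def GoodControlAt {n : ℕ} (Q : Rn n → ℝ≥0∞) (y0 : Rn n) : Prop :=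
  ∃ ε0 > (0 : ℝ), ∃ ψ : ℝ → ℝ≥0∞, Measurable ψ ∧
    (∀ ε ∈ Set.Ioo (0 : ℝ) ε0, (∫⁻ t in Set.Ioo ε ε0, ψ t) ≠ ⊤) ∧
    Filter.Tendsto (fun ε => ∫⁻ t in Set.Ioo ε ε0, ψ t) (𝓝[>] (0 : ℝ)) (𝓝 ⊤) ∧
    ∃ α : ℝ → ℝ,
      (∀ ε ∈ Set.Ioo (0 : ℝ) ε0, 0 < α ε ∧
        (∫⁻ y in annulusA y0 ε ε0, Q y * ψ (dist y y0) ^ n) =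
          ENNReal.ofReal (α ε) * (∫⁻ t in Set.Ioo ε ε0, ψ t) ^ n) ∧
      Filter.Tendsto α (𝓝[>] (0 : ℝ)) (𝓝 0)

/-- The control hypothesis for every `y₀ ∈ ℝ̄ⁿ` (at `y₀ = ∞` understood via the
inversion `y ↦ y/|y|²`, i.e. with `Q(y/|y|²)` in place of `Q` and annuli at the origin). -/
def GoodControlAll {n : ℕ} (Q : Rn n → ℝ≥0∞) : Prop :=
  (∀ y0 : Rn n, GoodControlAt Q y0) ∧ GoodControlAt (fun y => Q (inv0 y)) (0 : Rn n)

lemma chordal_coe_coe {n : ℕ} (u v : Rn n) :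
    chordal (u : OnePoint (Rn n)) (v : OnePoint (Rn n)) =
      dist u v / (Real.sqrt (1 + ‖u‖ ^ 2) * Real.sqrt (1 + ‖v‖ ^ 2)) := rfl

lemma sqrt1_pos {n : ℕ} (x : Rn n) : 0 < Real.sqrt (1 + ‖x‖ ^ 2) :=
  Real.sqrt_pos.2 (by positivity)

lemma one_le_sqrt1 {n : ℕ} (x : Rn n) : 1 ≤ Real.sqrt (1 + ‖x‖ ^ 2) := by
  nlinarith [Real.sq_sqrt (show (0:ℝ) ≤ 1 + ‖x‖ ^ 2 by positivity),
    Real.sqrt_nonneg (1 + ‖x‖ ^ 2), sq_nonneg ‖x‖]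

lemma eq_of_sq_eq {a b : ℝ} (ha : 0 ≤ a) (hb : 0 ≤ b) (h : a ^ 2 = b ^ 2) : a = b := by
  rw [← Real.sqrt_sq ha, ← Real.sqrt_sq hb, h]

/-- Stereographic embedding of `ℝ̄ⁿ` onto the unit sphere in `ℝⁿ × ℝ` (L2 norm). -/
def Phi {n : ℕ} : OnePoint (Rn n) → WithLp 2 ((Rn n) × ℝ)
  | Option.some x => (WithLp.equiv 2 _).symm
      ((2 / (1 + ‖x‖ ^ 2)) • x, (‖x‖ ^ 2 - 1) / (‖x‖ ^ 2 + 1))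
  | Option.none => (WithLp.equiv 2 _).symm (0, 1)

lemma Phi_dist {n : ℕ} (p q : OnePoint (Rn n)) : ‖Phi p - Phi q‖ = 2 * chordal p q := by
  have key : ∀ p q : OnePoint (Rn n), ‖Phi p - Phi q‖ ^ 2 = (2 * chordal p q) ^ 2 := by
    intro p q
    rw [WithLp.prod_norm_sq_eq_of_L2, WithLp.sub_fst, WithLp.sub_snd]
    match p, q with
    | Option.some x, Option.some y =>
      simp only [Phi, WithLp.equiv_symm_apply, WithLp.toLp_fst, WithLp.toLp_snd, chordal]
      have hX : (0:ℝ) < 1 + ‖x‖ ^ 2 := by positivity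
      have hY : (0:ℝ) < 1 + ‖y‖ ^ 2 := by positivity
      have h1 : ‖(2 / (1 + ‖x‖ ^ 2)) • x - (2 / (1 + ‖y‖ ^ 2)) • y‖ ^ 2 =
          (2 / (1 + ‖x‖ ^ 2)) ^ 2 * ‖x‖ ^ 2 -
            2 * ((2 / (1 + ‖x‖ ^ 2)) * (2 / (1 + ‖y‖ ^ 2))) * (inner ℝ x y : ℝ) +
            (2 / (1 + ‖y‖ ^ 2)) ^ 2 * ‖y‖ ^ 2 := by
        rw [← real_inner_self_eq_norm_sq, real_inner_sub_sub_self]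
        simp only [real_inner_smul_left, real_inner_smul_right,
          real_inner_self_eq_norm_sq, norm_smul, Real.norm_eq_abs, mul_pow, sq_abs]
        ring
      have hd : dist x y ^ 2 = ‖x‖ ^ 2 - 2 * (inner ℝ x y : ℝ) + ‖y‖ ^ 2 := by
        rw [dist_eq_norm, @norm_sub_sq_real]
      have hsq : (2 * (dist x y / (Real.sqrt (1 + ‖x‖ ^ 2) * Real.sqrt (1 + ‖y‖ ^ 2)))) ^ 2
          = 4 * (dist x y ^ 2) / ((1 + ‖x‖ ^ 2) * (1 + ‖y‖ ^ 2)) := by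
        rw [mul_pow, div_pow, mul_pow, Real.sq_sqrt hX.le, Real.sq_sqrt hY.le]
        ring
      rw [h1, Real.norm_eq_abs, sq_abs, hsq, hd]
      field_simp
      ring
    | Option.some x, Option.none =>
      simp only [Phi, WithLp.equiv_symm_apply, WithLp.toLp_fst, WithLp.toLp_snd, chordal]
      have hX : (0:ℝ) < 1 + ‖x‖ ^ 2 := by positivity
      rw [sub_zero, norm_smul, Real.norm_eq_abs, Real.norm_eq_abs]
      simp only [mul_pow, div_pow, one_pow, sq_abs]
      rw [Real.sq_sqrt hX.le]
      field_simp
      ring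
    | Option.none, Option.some y =>
      simp only [Phi, WithLp.equiv_symm_apply, WithLp.toLp_fst, WithLp.toLp_snd, chordal]
      have hY : (0:ℝ) < 1 + ‖y‖ ^ 2 := by positivity
      rw [zero_sub, norm_neg, norm_smul, Real.norm_eq_abs, Real.norm_eq_abs]
      simp only [mul_pow, div_pow, one_pow, sq_abs]
      rw [Real.sq_sqrt hY.le]
      field_simp
      ring
    | Option.none, Option.none => simp [Phi, chordal]
  have hch : 0 ≤ chordal p q := by
    match p, q with
    | Option.some x, Option.some y =>
      exact div_nonneg dist_nonneg (by positivity)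
    | Option.some x, Option.none =>
      exact div_nonneg zero_le_one (Real.sqrt_nonneg _)
    | Option.none, Option.some y =>
      exact div_nonneg zero_le_one (Real.sqrt_nonneg _)
    | Option.none, Option.none => exact le_refl 0
  exact eq_of_sq_eq (norm_nonneg _) (by linarith) (key p q)

lemma chordal_nonneg {n : ℕ} (p q : OnePoint (Rn n)) : 0 ≤ chordal p q := by
  have := Phi_dist p q
  nlinarith [norm_nonneg (Phi p - Phi q)]

lemma chordal_comm {n : ℕ} (p q : OnePoint (Rn n)) : chordal p q = chordal q p := by
  have h1 := Phi_dist p q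
  have h2 := Phi_dist q p
  rw [norm_sub_rev] at h1
  linarith

lemma chordal_triangle {n : ℕ} (p q r : OnePoint (Rn n)) :
    chordal p r ≤ chordal p q + chordal q r := by
  have h1 := Phi_dist p q
  have h2 := Phi_dist q r
  have h3 := Phi_dist p r
  have := norm_sub_le_norm_sub_add_norm_sub (Phi p) (Phi q) (Phi r)
  linarith

lemma chordal_pos {n : ℕ} {p q : OnePoint (Rn n)} (h : p ≠ q) : 0 < chordal p q := by
  match p, q with
  | Option.some x, Option.some y =>
    have hxy : x ≠ y := fun hh => h (by rw [hh])
    exact div_pos (dist_pos.2 hxy) (by positivity)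
  | Option.some x, Option.none => exact div_pos one_pos (sqrt1_pos x)
  | Option.none, Option.some y => exact div_pos one_pos (sqrt1_pos y)
  | Option.none, Option.none => exact absurd rfl h

lemma chordal_le_dist {n : ℕ} (u v : Rn n) :
    chordal (u : OnePoint (Rn n)) (v : OnePoint (Rn n)) ≤ dist u v := by
  rw [chordal_coe_coe]
  apply div_le_self dist_nonneg
  nlinarith [one_le_sqrt1 u, one_le_sqrt1 v]

/-- Lemma 4: if homeomorphisms `f_j : D → ℝⁿ` satisfying the inverse
Poletsky inequality with `Q` at a point `y₀ ∈ ℝⁿ` converge locally uniformly (w.r.t. the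
chordal metric) to a nonconstant mapping `f : D → ℝ̄ⁿ`, then for every `y₀' ∈ ℝⁿ` there
are `ε₀ > 0`, `z₀ ∈ D` and `ε₂ > 0` with
`f_m(B̄(z₀,ε₂)) ∩ B̄(y₀',ε₀) = ∅` for all `m`. -/
theorem statement3 {n : ℕ} (hn : 2 ≤ n) (D : Set (Rn n)) (hDopen : IsOpen D)
    (hDconn : IsConnected D) (Q : Rn n → ℝ≥0∞) (hQmeas : Measurable Q)
    (fm : ℕ → Rn n → Rn n) (f : Rn n → OnePoint (Rn n))
    (hhom : ∀ m : ℕ, IsHomeoOn (fm m) D)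
    (y0 : Rn n) (hIP : ∀ m : ℕ, InversePoletskyAt (fm m) D Q y0)
    (hconv : ChordalLocUnif fm f D)
    (hnc : ¬ ∃ c : OnePoint (Rn n), ∀ x ∈ D, f x = c) :
    ∀ y0' : Rn n, ∃ ε0 > (0 : ℝ), ∃ z0 ∈ D, ∃ ε2 > (0 : ℝ),
      ∀ m : ℕ, (fm m '' Metric.closedBall z0 ε2) ∩ Metric.closedBall y0' ε0 = ∅ := by
  intro y0'
  push_neg at hnc
  obtain ⟨z, hzD, hfz⟩ := hnc (y0' : OnePoint (Rn n))
  set c := chordal (f z) (y0' : OnePoint (Rn n)) with hc_def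
  have hc : 0 < c := chordal_pos hfz
  obtain ⟨δ, hδ, N, H⟩ := hconv z hzD (c/8) (by linarith)
  have hctN : ContinuousAt (fm N) z := (hhom N).1.continuousAt (hDopen.mem_nhds hzD)
  obtain ⟨δ1, hδ1, hcont⟩ := Metric.continuousAt_iff.mp hctN (c/8) (by linarith)
  set δ3 := min δ δ1 with hδ3_def
  have hδ3 : 0 < δ3 := lt_min hδ hδ1
  have hzz : chordal (↑(fm N z)) (f z) < c/8 := H N le_rfl z hzD (by simpa using hδ)
  have h2 : 7*c/8 ≤ chordal (↑(fm N z)) (y0' : OnePoint (Rn n)) := by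
    have ht := chordal_triangle (f z) (↑(fm N z)) (y0' : OnePoint (Rn n))
    have hcm := chordal_comm (f z) (↑(fm N z))
    linarith
  have keyA : ∀ x ∈ D, dist x z < δ3 → ∀ m, N ≤ m → c/2 ≤ dist (fm m x) y0' := by
    intro x hxD hxz m hm
    have hxδ : dist x z < δ := lt_of_lt_of_le hxz (min_le_left _ _)
    have hxδ1 : dist x z < δ1 := lt_of_lt_of_le hxz (min_le_right _ _)
    have hce : dist (fm N x) (fm N z) < c/8 := hcont hxδ1
    have h3 : 6*c/8 ≤ chordal (↑(fm N x)) (y0' : OnePoint (Rn n)) := by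
      have ht := chordal_triangle (↑(fm N z)) (↑(fm N x)) (y0' : OnePoint (Rn n))
      have hle := chordal_le_dist (fm N z) (fm N x)
      rw [dist_comm] at hce
      linarith
    have hNx : chordal (↑(fm N x)) (f x) < c/8 := H N le_rfl x hxD hxδ
    have h4 : 5*c/8 ≤ chordal (f x) (y0' : OnePoint (Rn n)) := by
      have ht := chordal_triangle (↑(fm N x)) (f x) (y0' : OnePoint (Rn n))
      linarith
    have hmx : chordal (↑(fm m x)) (f x) < c/8 := H m hm x hxD hxδ
    have h5 : c/2 ≤ chordal (↑(fm m x)) (y0' : OnePoint (Rn n)) := by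
      have ht := chordal_triangle (f x) (↑(fm m x)) (y0' : OnePoint (Rn n))
      have hcm := chordal_comm (f x) (↑(fm m x))
      linarith
    linarith [chordal_le_dist (fm m x) y0']
  haveI : NeZero n := ⟨by omega⟩
  haveI : Nontrivial (Rn n) := by
    refine ⟨EuclideanSpace.single (0 : Fin n) (1:ℝ), 0, fun h => ?_⟩
    have := congrFun (congrArg (fun g : Rn n => (g : Fin n → ℝ)) h) 0
    simpa [EuclideanSpace.single_apply] using this
  have hUopen : IsOpen (D ∩ Metric.ball z δ3) := hDopen.inter Metric.isOpen_ball
  have hUnhds : D ∩ Metric.ball z δ3 ∈ 𝓝 z :=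
    hUopen.mem_nhds ⟨hzD, Metric.mem_ball_self hδ3⟩
  have hUinf : (D ∩ Metric.ball z δ3).Infinite := infinite_of_mem_nhds z hUnhds
  set S : Set (Rn n) := ⋃ m ∈ Set.Iio N, {x | x ∈ D ∧ fm m x = y0'} with hS_def
  have hSfin : S.Finite := by
    apply Set.Finite.biUnion (Set.finite_Iio N)
    intro m _
    apply Set.Subsingleton.finite
    intro a ha b hb
    exact (hhom m).2.1 ha.1 hb.1 (ha.2.trans hb.2.symm)
  obtain ⟨z1, hz1U, hz1S⟩ := (hUinf.diff hSfin).nonempty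
  have hz1D : z1 ∈ D := hz1U.1
  have hz1ball : z1 ∈ Metric.ball z δ3 := hz1U.2
  have hne : ∀ m, m < N → fm m z1 ≠ y0' := by
    intro m hm hcon
    exact hz1S (Set.mem_biUnion (show m ∈ Set.Iio N from hm) ⟨hz1D, hcon⟩)
  have hr : ∀ m : ℕ, ∃ rr > (0:ℝ), ∀ x : Rn n, dist x z1 < rr →
      (m < N → dist (fm m x) (fm m z1) < dist (fm m z1) y0' / 2) := by
    intro m
    by_cases hm : m < N
    · have hd : 0 < dist (fm m z1) y0' / 2 := by
        have := dist_pos.2 (hne m hm); linarith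
      have hct : ContinuousAt (fm m) z1 := (hhom m).1.continuousAt (hDopen.mem_nhds hz1D)
      obtain ⟨rr, hrr, hprop⟩ := Metric.continuousAt_iff.mp hct _ hd
      exact ⟨rr, hrr, fun x hx _ => hprop hx⟩
    · exact ⟨1, one_pos, fun x _ hm' => absurd hm' hm⟩
  choose r hrpos hrprop using hr
  obtain ⟨ρ, hρ, hρsub⟩ := Metric.isOpen_iff.mp hUopen z1 ⟨hz1D, hz1ball⟩
  set F0 : Finset ℝ :=
    insert (c/4) ((Finset.range N).image (fun m => dist (fm m z1) y0' / 4)) with hF0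
  have hF0ne : F0.Nonempty := ⟨c/4, Finset.mem_insert_self _ _⟩
  set ε0 := F0.min' hF0ne with hε0def
  have hε0pos : 0 < ε0 := by
    rw [hε0def]
    apply (Finset.lt_min'_iff _ _).2
    intro b hb
    rw [hF0] at hb
    rcases Finset.mem_insert.1 hb with h | h
    · rw [h]; linarith
    · obtain ⟨m, hm, rfl⟩ := Finset.mem_image.1 h
      have := dist_pos.2 (hne m (Finset.mem_range.1 hm)); linarith
  have hε0c : ε0 ≤ c/4 := Finset.min'_le _ _ (Finset.mem_insert_self _ _)
  have hε0d : ∀ m, m < N → ε0 ≤ dist (fm m z1) y0' / 4 := fun m hm =>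
    Finset.min'_le _ _
      (Finset.mem_insert_of_mem (Finset.mem_image_of_mem _ (Finset.mem_range.2 hm)))
  set F2 : Finset ℝ :=
    insert (ρ/2) ((Finset.range N).image (fun m => r m / 2)) with hF2
  have hF2ne : F2.Nonempty := ⟨ρ/2, Finset.mem_insert_self _ _⟩
  set ε2 := F2.min' hF2ne with hε2def
  have hε2pos : 0 < ε2 := by
    rw [hε2def]
    apply (Finset.lt_min'_iff _ _).2
    intro b hb
    rw [hF2] at hb
    rcases Finset.mem_insert.1 hb with h | h
    · rw [h]; linarith
    · obtain ⟨m, hm, rfl⟩ := Finset.mem_image.1 h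
      have := hrpos m; linarith
  have hε2ρ : ε2 ≤ ρ/2 := Finset.min'_le _ _ (Finset.mem_insert_self _ _)
  have hε2r : ∀ m, m < N → ε2 ≤ r m / 2 := fun m hm =>
    Finset.min'_le _ _
      (Finset.mem_insert_of_mem (Finset.mem_image_of_mem _ (Finset.mem_range.2 hm)))
  refine ⟨ε0, hε0pos, z1, hz1D, ε2, hε2pos, fun m => ?_⟩
  rw [Set.eq_empty_iff_forall_notMem]
  rintro y ⟨⟨x, hx, rfl⟩, hy⟩
  have hxz1 : dist x z1 ≤ ε2 := Metric.mem_closedBall.1 hx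
  have hxU : x ∈ D ∩ Metric.ball z δ3 := by
    apply hρsub
    rw [Metric.mem_ball]
    linarith
  have hyd : dist (fm m x) y0' ≤ ε0 := Metric.mem_closedBall.1 hy
  by_cases hm : N ≤ m
  · have := keyA x hxU.1 (Metric.mem_ball.1 hxU.2) m hm
    linarith
  · push_neg at hm
    have hxr : dist x z1 < r m := by
      have := hε2r m hm; have := hrpos m; linarith
    have h1 : dist (fm m x) (fm m z1) < dist (fm m z1) y0' / 2 := hrprop m x hxr hm
    have h2 := hε0d m hm
    have hd := dist_pos.2 (hne m hm)
    have htri := dist_triangle (fm m z1) (fm m x) y0'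
    rw [dist_comm (fm m z1) (fm m x)] at htri
    linarith
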